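/- Point complexity dominates the lower local dimension of any Borel measure almost everywhere: if μ is a Borel probability measure on X with lower local dimension d_μ(x) = liminf_{ε→0} log μ(B(x,ε))/log ε, then for μ-almost every x, liminf_{i→∞} S^I(x, 2^{-i})/i ≥ d_μ(x); equivalently, for a.e. x and every δ > 0, S^I(x,ε) ≥ −(d_μ(x) − δ) log₂ ε for all sufficiently small ε. -/

import Mathlib

open Metric Set Filter ENNReal MeasureTheory

/-- `I : Σ → X` is a computable interpretation. -/
def IsCompInterp {X : Type*} [MetricSpace X] (I : List Bool → X) : Prop :=
  DenseRange I ∧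
    ∃ D : List Bool → List Bool → ℕ → ℚ,
      Computable (fun q : (List Bool × List Bool) × ℕ => D q.1.1 q.1.2 q.2) ∧
      ∀ (s₁ s₂ : List Bool) (n : ℕ),
        |dist (I s₁) (I s₂) - (D s₁ s₂ n : ℝ)| ≤ (2 : ℝ)⁻¹ ^ n

/-- `S^I(x,ε) = min{|p| : d(I(U(p)), x) < ε}`. -/
noncomputable def Sinfo (U : List Bool →. List Bool) {Y : Type*} [MetricSpace Y]
    (I : List Bool → Y) (x : Y) (ε : ℝ) : ℕ∞ :=
  sInf {n : ℕ∞ | ∃ p : List Bool, (p.length : ℕ∞) = n ∧ ∃ s ∈ U p, dist (I s) x < ε}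

/-- The lower local dimension of a measure `μ` at `x`:
`d_μ(x) = liminf_{ε→0⁺} log μ(B(x,ε)) / log ε`. -/
noncomputable def lowerLocalDim {X : Type*} [MetricSpace X] [MeasurableSpace X]
    (μ : Measure X) (x : X) : ℝ :=
  liminf (fun ε : ℝ => Real.log (μ (ball x ε)).toReal / Real.log ε)
    (nhdsWithin 0 (Ioi 0))


namespace Stmt19Aux

/-! ### Counting programs -/

/-- binary encoding of a list with leading 1 -/
def enc : List Bool → ℕ
  | [] => 1
  | b :: l => 2 * enc l + b.toNat

lemma one_le_enc (l : List Bool) : 1 ≤ enc l := by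
  induction l with
  | nil => simp [enc]
  | cons b l ih => simp only [enc]; omega

lemma enc_injective : Function.Injective enc := by
  intro l₁
  induction l₁ with
  | nil =>
    intro l₂ h
    cases l₂ with
    | nil => rfl
    | cons b l =>
      exfalso
      have := one_le_enc l
      simp only [enc] at h
      cases b <;> simp [Bool.toNat] at h <;> omega
  | cons b l ih =>
    intro l₂ h
    cases l₂ with
    | nil =>
      exfalso
      have := one_le_enc l
      simp only [enc] at h
      cases b <;> simp [Bool.toNat] at h <;> omega
    | cons c m =>
      simp only [enc] at h
      have hb : b = c ∧ enc l = enc m := by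
        cases b <;> cases c <;> simp [Bool.toNat] at h ⊢ <;> omega
      rw [hb.1, ih hb.2]

lemma enc_lt (l : List Bool) : enc l < 2 ^ (l.length + 1) := by
  induction l with
  | nil => simp [enc]
  | cons b l ih =>
    simp only [enc, List.length_cons, pow_succ]
    cases b <;> simp [Bool.toNat] <;> omega

lemma tsum_range_ite (N : ℕ) (c : ℝ≥0∞) :
    (∑' n : ℕ, if n < N then c else 0) = N * c := by
  rw [tsum_eq_sum (s := Finset.range N) (by intro n hn; simp [Finset.mem_range] at hn; simp [hn])]
  have : ∀ n ∈ Finset.range N, (if n < N then c else 0) = c := by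
    intro n hn; simp [Finset.mem_range.mp hn]
  rw [Finset.sum_congr rfl this, Finset.sum_const, Finset.card_range, nsmul_eq_mul]

lemma tsum_length_le (m : ℕ) (f : List Bool → ℝ≥0∞) (c : ℝ≥0∞)
    (hf : ∀ p, f p ≤ if p.length ≤ m then c else 0) :
    ∑' p : List Bool, f p ≤ 2 ^ (m + 1) * c := by
  calc ∑' p : List Bool, f p
      ≤ ∑' p : List Bool, (if enc p < 2 ^ (m+1) then c else 0) := by
        apply ENNReal.tsum_le_tsum
        intro p
        refine (hf p).trans ?_
        by_cases h : p.length ≤ m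
        · have : enc p < 2 ^ (m+1) :=
            lt_of_lt_of_le (enc_lt p) (Nat.pow_le_pow_right (by norm_num) (by omega))
          simp [h, this]
        · simp [h]
    _ ≤ ∑' n : ℕ, (if n < 2 ^ (m+1) then c else 0) :=
        ENNReal.tsum_comp_le_tsum_of_injective enc_injective _
    _ = 2 ^ (m+1) * c := by rw [tsum_range_ite]; push_cast; ring

/-! ### The covering argument -/

variable {X : Type*} [MetricSpace X] [MeasurableSpace X]

/-- points where small balls obey a `q`-power bound, uniformly below `1/(t+1)`. -/
def Eset (μ : Measure X) (q : ℝ) (t : ℕ) : Set X :=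
  {x | ∀ r : ℝ, 0 < r → r < ((t : ℝ) + 1)⁻¹ → μ (ball x r) ≤ ENNReal.ofReal (r ^ q)}

/-- balls of radius `2⁻¹ ^ i` around interpretations of outputs of programs of
length `< s' * i`. -/
def cover (I : List Bool → X) (U : List Bool →. List Bool) (i : ℕ) (s' : ℝ) : Set X :=
  ⋃ p : List Bool,
    if (p.length : ℝ) < s' * i then
      ⋃ s ∈ {s : List Bool | s ∈ U p}, ball (I s) ((2 : ℝ)⁻¹ ^ i)
    else ∅

lemma measure_inner_le (μ : Measure X) (q : ℝ) (t : ℕ) (ρ : ℝ) (hρ : 0 < ρ)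
    (hρt : 2 * ρ < ((t : ℝ) + 1)⁻¹) (p : List Bool) (U : List Bool →. List Bool)
    (I : List Bool → X) :
    μ (Eset μ q t ∩ ⋃ s ∈ {s : List Bool | s ∈ U p}, ball (I s) ρ) ≤
      ENNReal.ofReal ((2 * ρ) ^ q) := by
  rcases eq_empty_or_nonempty (Eset μ q t ∩ ⋃ s ∈ {s : List Bool | s ∈ U p}, ball (I s) ρ)
    with h | ⟨x, hxE, hxB⟩
  · rw [h]; simp
  · simp only [mem_iUnion, mem_setOf_eq] at hxB
    obtain ⟨s₀, hs₀, hxball⟩ := hxB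
    have hsub : (Eset μ q t ∩ ⋃ s ∈ {s : List Bool | s ∈ U p}, ball (I s) ρ) ⊆
        ball x (2 * ρ) := by
      rintro y ⟨-, hy⟩
      simp only [mem_iUnion, mem_setOf_eq] at hy
      obtain ⟨s, hs, hyball⟩ := hy
      have : s = s₀ := Part.mem_unique hs hs₀
      subst this
      rw [mem_ball] at hxball hyball ⊢
      calc dist y x ≤ dist y (I s) + dist (I s) x := dist_triangle _ _ _
        _ < ρ + ρ := add_lt_add hyball (by rw [dist_comm]; exact hxball)
        _ = 2 * ρ := by ring
    calc μ _ ≤ μ (ball x (2 * ρ)) := measure_mono hsub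
      _ ≤ ENNReal.ofReal ((2 * ρ) ^ q) := hxE (2 * ρ) (by linarith) hρt

lemma measure_cover_le (μ : Measure X) (I : List Bool → X) (U : List Bool →. List Bool)
    (q s' : ℝ) (hq : 0 < q) (hs' : 0 < s') (t i : ℕ)
    (hi : 2 * ((2:ℝ)⁻¹ ^ i) < ((t : ℝ) + 1)⁻¹) :
    μ (Eset μ q t ∩ cover I U i s') ≤
      ENNReal.ofReal (2 ^ ((1:ℝ) + q)) * ENNReal.ofReal ((2:ℝ) ^ (s' - q)) ^ i := by
  have hρ : (0:ℝ) < (2:ℝ)⁻¹ ^ i := by positivity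
  set m : ℕ := ⌊s' * i⌋₊ with hm
  set B : ℝ≥0∞ := ENNReal.ofReal ((2 * ((2:ℝ)⁻¹ ^ i)) ^ q) with hB
  have h1 : μ (Eset μ q t ∩ cover I U i s') ≤
      ∑' p : List Bool, μ (Eset μ q t ∩
        (if (p.length : ℝ) < s' * i then
          ⋃ s ∈ {s : List Bool | s ∈ U p}, ball (I s) ((2 : ℝ)⁻¹ ^ i) else ∅)) := by
    rw [cover, inter_iUnion]
    exact measure_iUnion_le _
  have h2 : ∑' p : List Bool, μ (Eset μ q t ∩
        (if (p.length : ℝ) < s' * i then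
          ⋃ s ∈ {s : List Bool | s ∈ U p}, ball (I s) ((2 : ℝ)⁻¹ ^ i) else ∅)) ≤
      2 ^ (m + 1) * B := by
    apply tsum_length_le
    intro p
    by_cases hp : (p.length : ℝ) < s' * i
    · rw [if_pos hp]
      have hlen : p.length ≤ m := by
        have h3 : s' * i < m + 1 := Nat.lt_floor_add_one _
        have h4 : (p.length : ℝ) < (m:ℝ) + 1 := lt_trans hp h3
        exact_mod_cast Nat.lt_succ_iff.mp (by exact_mod_cast h4)
      rw [if_pos hlen]
      exact measure_inner_le μ q t _ hρ hi p U I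
    · rw [if_neg hp]
      simp
  refine (h1.trans h2).trans ?_
  have e1 : 2 * ((2:ℝ)⁻¹ ^ i) = 2 ^ ((1:ℝ) - i) := by
    rw [Real.rpow_sub (by norm_num), Real.rpow_one, Real.rpow_natCast, inv_pow, div_eq_mul_inv]
  have e2 : B = ENNReal.ofReal ((2:ℝ) ^ (((1:ℝ) - i) * q)) := by
    rw [hB, e1, ← Real.rpow_mul (by norm_num)]
  have e3 : ((2:ℝ≥0∞) ^ (m+1)) = ENNReal.ofReal ((2:ℝ) ^ (m+1)) := by
    rw [show (2:ℝ≥0∞) = ENNReal.ofReal 2 by norm_num, ← ENNReal.ofReal_pow (by norm_num)]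
  have e4 : ENNReal.ofReal ((2:ℝ) ^ (s' - q)) ^ i = ENNReal.ofReal ((2:ℝ) ^ ((s' - q) * i)) := by
    rw [← ENNReal.ofReal_pow (by positivity), ← Real.rpow_natCast ((2:ℝ)^(s'-q)) i,
      ← Real.rpow_mul (by norm_num)]
  rw [e2, e3, e4, ← ENNReal.ofReal_mul (by positivity), ← ENNReal.ofReal_mul (by positivity)]
  apply ENNReal.ofReal_le_ofReal
  have hm2 : (m:ℝ) ≤ s' * i := Nat.floor_le (by positivity)
  rw [← Real.rpow_natCast 2 (m+1), ← Real.rpow_add (by norm_num : (0:ℝ) < 2),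
    ← Real.rpow_add (by norm_num : (0:ℝ) < 2)]
  apply Real.rpow_le_rpow_of_exponent_le (by norm_num)
  push_cast
  nlinarith

/-- The bad set: points covered infinitely often. -/
def Bad (I : List Bool → X) (U : List Bool →. List Bool) (s' : ℝ) : Set X :=
  ⋂ k : ℕ, ⋃ j : ℕ, cover I U (k + j) s'

lemma measure_bad_inter_eset (μ : Measure X) [IsProbabilityMeasure μ]
    (I : List Bool → X) (U : List Bool →. List Bool)
    (q s' : ℝ) (hs' : 0 < s') (hs'q : s' < q) (t : ℕ) :
    μ (Eset μ q t ∩ Bad I U s') = 0 := by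
  have hq : 0 < q := lt_trans hs' hs'q
  set C : ℝ≥0∞ := ENNReal.ofReal (2 ^ ((1:ℝ) + q)) with hC
  set r : ℝ≥0∞ := ENNReal.ofReal ((2:ℝ) ^ (s' - q)) with hr
  have hr1 : r < 1 := by
    rw [hr, show (1:ℝ≥0∞) = ENNReal.ofReal 1 by norm_num]
    apply (ENNReal.ofReal_lt_ofReal_iff (by norm_num)).mpr
    rw [show (1:ℝ) = (2:ℝ) ^ (0:ℝ) by norm_num]
    exact Real.rpow_lt_rpow_of_exponent_lt (by norm_num) (by linarith)
  have hCtop : C ≠ ⊤ := ENNReal.ofReal_ne_top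
  have hinv : (1 - r)⁻¹ ≠ ⊤ := by
    simp only [ne_eq, ENNReal.inv_eq_top, tsub_eq_zero_iff_le, not_le]
    exact hr1
  obtain ⟨K, hK⟩ : ∃ K : ℕ, ∀ i ≥ K, 2 * ((2:ℝ)⁻¹ ^ i) < ((t : ℝ) + 1)⁻¹ := by
    have h2 : Tendsto (fun i : ℕ => 2 * ((2:ℝ)⁻¹ ^ i)) atTop (nhds 0) := by
      simpa using (tendsto_pow_atTop_nhds_zero_of_lt_one (by norm_num : (0:ℝ) ≤ 2⁻¹)
        (by norm_num : (2:ℝ)⁻¹ < 1)).const_mul 2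
    have := (h2.eventually (eventually_lt_nhds (by positivity : (0:ℝ) < ((t:ℝ)+1)⁻¹)))
    exact this.exists_forall_of_atTop
  have key : ∀ k ≥ K, μ (Eset μ q t ∩ Bad I U s') ≤ C * (1 - r)⁻¹ * r ^ k := by
    intro k hk
    have hsub : Eset μ q t ∩ Bad I U s' ⊆
        ⋃ j : ℕ, Eset μ q t ∩ cover I U (k + j) s' := by
      rintro x ⟨hxE, hxB⟩
      have := mem_iInter.mp hxB k
      obtain ⟨j, hj⟩ := mem_iUnion.mp this
      exact mem_iUnion.mpr ⟨j, hxE, hj⟩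
    calc μ (Eset μ q t ∩ Bad I U s') ≤ ∑' j : ℕ, μ (Eset μ q t ∩ cover I U (k + j) s') :=
          (measure_mono hsub).trans (measure_iUnion_le _)
      _ ≤ ∑' j : ℕ, C * r ^ (k + j) := by
          apply ENNReal.tsum_le_tsum
          intro j
          exact measure_cover_le μ I U q s' hq hs' t (k + j) (hK (k + j) (by omega))
      _ = C * (1 - r)⁻¹ * r ^ k := by
          have : ∀ j : ℕ, C * r ^ (k + j) = (C * r ^ k) * r ^ j := by
            intro j; rw [pow_add]; ring
          simp only [this]
          rw [ENNReal.tsum_mul_left, ENNReal.tsum_geometric]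
          ring
  have htend : Tendsto (fun k : ℕ => C * (1 - r)⁻¹ * r ^ k) atTop (nhds 0) := by
    have := ENNReal.tendsto_pow_atTop_nhds_zero_of_lt_one hr1
    simpa using ENNReal.Tendsto.const_mul this
      (Or.inr (ENNReal.mul_ne_top hCtop hinv))
  have hfin : μ (Eset μ q t ∩ Bad I U s') ≤ 0 := by
    apply ge_of_tendsto htend
    filter_upwards [eventually_ge_atTop K] with k hk using key k hk
  exact le_antisymm hfin zero_le

/-! ### Membership in `Eset` from the lower local dimension -/

lemma exists_eset_mem (μ : Measure X) [IsProbabilityMeasure μ] (x : X) (q : ℝ) (hq : 0 < q)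
    (h : q < lowerLocalDim μ x) : ∃ t : ℕ, x ∈ Eset μ q t := by
  set f : ℝ → ℝ := fun e => Real.log (μ (ball x e)).toReal / Real.log e with hf
  have hev : ∀ᶠ e in nhdsWithin 0 (Ioi 0), q < f e := by
    rw [lowerLocalDim, liminf_eq] at h
    set S := {a : ℝ | ∀ᶠ e in nhdsWithin 0 (Ioi 0), a ≤ f e} with hS
    have hne : S.Nonempty := by
      by_contra hemp
      rw [not_nonempty_iff_eq_empty] at hemp
      rw [hemp, Real.sSup_empty] at h
      linarith
    obtain ⟨a, haS, hqa⟩ := exists_lt_of_lt_csSup hne h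
    filter_upwards [haS] with e he using lt_of_lt_of_le hqa he
  rw [eventually_nhdsWithin_iff] at hev
  obtain ⟨eta, heta, hball⟩ := Metric.eventually_nhds_iff.mp hev
  have hbound : ∀ e : ℝ, 0 < e → e < min eta 1 → μ (ball x e) ≤ ENNReal.ofReal (e ^ q) := by
    intro e he helt
    have he1 : e < 1 := lt_of_lt_of_le helt (min_le_right _ _)
    have heeta : e < eta := lt_of_lt_of_le helt (min_le_left _ _)
    have hqf : q < f e := by
      apply hball (y := e) _ (mem_Ioi.mpr he)
      rw [Real.dist_eq, sub_zero, abs_of_pos he]; exact heeta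
    have hlog : Real.log e < 0 := Real.log_neg he he1
    have hL : Real.log (μ (ball x e)).toReal < q * Real.log e := by
      rw [hf] at hqf
      simp only at hqf
      have h2 := mul_lt_mul_of_neg_right hqf hlog
      rwa [div_mul_cancel₀ _ (ne_of_lt hlog)] at h2
    have hpos : 0 < (μ (ball x e)).toReal := by
      rcases lt_or_eq_of_le (ENNReal.toReal_nonneg (a := μ (ball x e))) with h0 | h0
      · exact h0
      · exfalso
        rw [← h0, Real.log_zero] at hL
        nlinarith
    have hlt : (μ (ball x e)).toReal < e ^ q := by
      have h3 := Real.exp_lt_exp.mpr hL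
      rwa [Real.exp_log hpos, ← Real.log_rpow he, Real.exp_log (Real.rpow_pos_of_pos he q)] at h3
    exact (ENNReal.le_ofReal_iff_toReal_le (measure_ne_top μ _) (by positivity)).mpr hlt.le
  obtain ⟨t, ht⟩ := exists_nat_gt (min eta 1)⁻¹
  refine ⟨t, fun r hr hrt => ?_⟩
  apply hbound r hr
  have hmin : 0 < min eta 1 := lt_min heta one_pos
  calc r < ((t : ℝ) + 1)⁻¹ := hrt
    _ ≤ min eta 1 := by
        rw [inv_le_comm₀ (by positivity) hmin]
        exact le_trans ht.le (by linarith)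

/-! ### Monotonicity of `Sinfo` and the pointwise second conjunct -/

lemma Sinfo_anti {Y : Type*} [MetricSpace Y] (U : List Bool →. List Bool)
    (I : List Bool → Y) (x : Y) {ε ε' : ℝ} (h : ε ≤ ε') :
    Sinfo U I x ε' ≤ Sinfo U I x ε := by
  apply sInf_le_sInf
  rintro n ⟨p, hp, s, hs, hd⟩
  exact ⟨p, hp, s, hs, lt_of_lt_of_le hd h⟩

lemma second_of_first {Y : Type*} [MetricSpace Y] (U : List Bool →. List Bool)
    (I : List Bool → Y) (x : Y) (d δ : ℝ) (hδ : 0 < δ)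
    (h1 : ENNReal.ofReal d ≤
      liminf (fun i : ℕ => (Sinfo U I x ((2 : ℝ)⁻¹ ^ i) : ℝ≥0∞) / (i : ℝ≥0∞)) atTop) :
    ∃ εbar > (0:ℝ), ∀ ε : ℝ, 0 < ε → ε < εbar →
      ENNReal.ofReal (-(d - δ) * Real.logb 2 ε) ≤ (Sinfo U I x ε : ℝ≥0∞) := by
  by_cases hdδ : d ≤ δ
  · refine ⟨1, one_pos, fun ε hε hε1 => ?_⟩
    have hlogb : Real.logb 2 ε < 0 := Real.logb_neg (by norm_num) hε hε1
    have hnp : -(d - δ) * Real.logb 2 ε ≤ 0 :=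
      mul_nonpos_of_nonneg_of_nonpos (by linarith) hlogb.le
    rw [ENNReal.ofReal_eq_zero.mpr hnp]
    exact zero_le
  · push_neg at hdδ
    have hd2 : ENNReal.ofReal (d - δ/2) < ENNReal.ofReal d :=
      (ENNReal.ofReal_lt_ofReal_iff (by linarith)).mpr (by linarith)
    obtain ⟨N, hN⟩ := eventually_atTop.mp (eventually_lt_of_lt_liminf (lt_of_lt_of_le hd2 h1))
    set M : ℕ := max (max N 1) ⌈2*(d-δ)/δ⌉₊ with hM
    refine ⟨(2:ℝ)⁻¹ ^ M, by positivity, fun ε hε hεM => ?_⟩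
    have hlogM : Real.logb 2 ((2:ℝ)⁻¹ ^ M) = -(M:ℝ) := by
      rw [inv_pow, Real.logb_inv, ← Real.rpow_natCast 2 M, Real.logb_rpow (by norm_num)]
      all_goals norm_num
    have hMy : (M:ℝ) < Real.logb 2 ε⁻¹ := by
      rw [Real.logb_inv]
      have h4 := Real.logb_lt_logb (b := 2) (by norm_num) hε hεM
      rw [hlogM] at h4
      linarith
    set y := Real.logb 2 ε⁻¹ with hy
    set i := ⌊y⌋₊ with hi
    have hMi : M ≤ i := Nat.le_floor hMy.le
    have hiy : (i:ℝ) ≤ y := Nat.floor_le (le_trans (by positivity) hMy.le)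
    have hyi : y < i + 1 := Nat.lt_floor_add_one y
    have hεi : ε ≤ (2:ℝ)⁻¹ ^ i := by
      have h2 : (2:ℝ) ^ ((i:ℕ):ℝ) ≤ 2 ^ y := Real.rpow_le_rpow_of_exponent_le (by norm_num) hiy
      rw [hy, Real.rpow_logb (by norm_num) (by norm_num) (by positivity)] at h2
      rw [Real.rpow_natCast] at h2
      calc ε = (ε⁻¹)⁻¹ := (inv_inv ε).symm
        _ ≤ ((2:ℝ)^i)⁻¹ := by
            apply inv_anti₀ (by positivity) h2
        _ = (2:ℝ)⁻¹ ^ i := by rw [inv_pow]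
    have hSle : ((Sinfo U I x ((2:ℝ)⁻¹ ^ i) : ℕ∞) : ℝ≥0∞) ≤ ((Sinfo U I x ε : ℕ∞) : ℝ≥0∞) := by
      have h5 := Sinfo_anti U I x hεi
      exact_mod_cast h5
    have hiS := hN i (le_trans (le_trans (le_max_left N 1) (le_max_left _ _)) hMi)
    have hi0 : ((i:ℝ≥0∞)) ≠ 0 := by
      have h6 : i ≠ 0 := by
        have h7 : 1 ≤ M := le_trans (le_max_right N 1) (le_max_left _ _)
        omega
      exact_mod_cast h6
    have hmul : ENNReal.ofReal (d - δ/2) * (i:ℝ≥0∞) ≤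
        ((Sinfo U I x ((2:ℝ)⁻¹ ^ i) : ℕ∞) : ℝ≥0∞) :=
      (ENNReal.le_div_iff_mul_le (Or.inl hi0) (Or.inl (ENNReal.natCast_ne_top i))).mp hiS.le
    have h2di : 2*(d-δ)/δ ≤ (i:ℝ) := by
      calc 2*(d-δ)/δ ≤ (⌈2*(d-δ)/δ⌉₊ : ℝ) := Nat.le_ceil _
        _ ≤ (M:ℝ) := by exact_mod_cast le_max_right (max N 1) _
        _ ≤ (i:ℝ) := by exact_mod_cast hMi
    have h3 : 2*(d-δ) ≤ (i:ℝ) * δ := by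
      rw [div_le_iff₀ hδ] at h2di
      linarith
    calc ENNReal.ofReal (-(d - δ) * Real.logb 2 ε)
        = ENNReal.ofReal ((d - δ) * y) := by rw [hy, Real.logb_inv]; ring_nf
      _ ≤ ENNReal.ofReal ((d - δ/2) * i) := by
          apply ENNReal.ofReal_le_ofReal
          have e1 : (d-δ)*y ≤ (d-δ)*((i:ℝ)+1) :=
            mul_le_mul_of_nonneg_left hyi.le (by linarith)
          nlinarith
      _ = ENNReal.ofReal (d - δ/2) * (i:ℝ≥0∞) := by
          rw [ENNReal.ofReal_mul (by linarith), ENNReal.ofReal_natCast]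
      _ ≤ _ := le_trans hmul hSle

end Stmt19Aux

open Stmt19Aux in
/-- Point complexity dominates the lower local dimension of any Borel probability
measure almost everywhere. -/
theorem stmt19 {X : Type*} [MetricSpace X] [MeasurableSpace X] [BorelSpace X]
    (I : List Bool → X) (hI : IsCompInterp I)
    (U : List Bool →. List Bool) (hU : Partrec U)
    (μ : Measure X) [IsProbabilityMeasure μ] :
    ∀ᵐ x ∂μ,
      ENNReal.ofReal (lowerLocalDim μ x) ≤
        liminf (fun i : ℕ => (Sinfo U I x ((2 : ℝ)⁻¹ ^ i) : ℝ≥0∞) / (i : ℝ≥0∞)) atTop ∧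
      ∀ δ > (0 : ℝ), ∃ εbar > (0 : ℝ), ∀ ε : ℝ, 0 < ε → ε < εbar →
        ENNReal.ofReal (-(lowerLocalDim μ x - δ) * Real.logb 2 ε) ≤
          (Sinfo U I x ε : ℝ≥0∞) := by
  classical
  set bad : ℚ × ℚ × ℕ → Set X := fun z =>
    {y | (0 < z.2.1 ∧ z.2.1 < z.1) ∧
      y ∈ Eset μ (z.1:ℝ) z.2.2 ∩ Bad I U (z.2.1:ℝ)} with hbad
  have hnull : ∀ z, μ (bad z) = 0 := by
    intro z
    by_cases hc : 0 < z.2.1 ∧ z.2.1 < z.1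
    · exact measure_mono_null (fun y hy => hy.2)
        (measure_bad_inter_eset μ I U _ _ (by exact_mod_cast hc.1) (by exact_mod_cast hc.2) _)
    · have hemp : bad z = ∅ := eq_empty_iff_forall_notMem.mpr (fun y hy => hc hy.1)
      rw [hemp]; exact measure_empty
  have hNull : μ (⋃ z, bad z) = 0 := measure_iUnion_null hnull
  filter_upwards [measure_eq_zero_iff_ae_notMem.mp hNull] with x hx
  have hxz : ∀ z, x ∉ bad z := fun z hz => hx (mem_iUnion.mpr ⟨z, hz⟩)
  have h1 : ENNReal.ofReal (lowerLocalDim μ x) ≤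
      liminf (fun i : ℕ => (Sinfo U I x ((2 : ℝ)⁻¹ ^ i) : ℝ≥0∞) / (i : ℝ≥0∞)) atTop := by
    by_contra hcon
    rw [not_le] at hcon
    set d := lowerLocalDim μ x with hd
    set L := liminf (fun i : ℕ => (Sinfo U I x ((2 : ℝ)⁻¹ ^ i) : ℝ≥0∞) / (i : ℝ≥0∞)) atTop
      with hLdef
    have hd0 : 0 < d := ENNReal.ofReal_pos.mp (lt_of_le_of_lt (zero_le : 0 ≤ L) hcon)
    have hLtop : L ≠ ⊤ := hcon.ne_top
    have hLt : L.toReal < d := (ENNReal.lt_ofReal_iff_toReal_lt hLtop).mp hcon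
    obtain ⟨q', hq'1, hq'2⟩ := exists_rat_btwn (max_lt hLt hd0 : max L.toReal 0 < d)
    obtain ⟨q, hq1, hq2⟩ := exists_rat_btwn hq'2
    have hq'0 : 0 < (q':ℝ) := lt_of_le_of_lt (le_max_right _ _) hq'1
    have hq0 : (0:ℝ) < q := hq'0.trans hq1
    obtain ⟨t, ht⟩ := exists_eset_mem μ x (q:ℝ) hq0 hq2
    have hLq' : L < ENNReal.ofReal (q':ℝ) :=
      (ENNReal.lt_ofReal_iff_toReal_lt hLtop).mpr (lt_of_le_of_lt (le_max_left _ _) hq'1)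
    have hfreq := frequently_lt_of_liminf_lt (h := hLq')
    have hbadmem : x ∈ Bad I U (q':ℝ) := by
      rw [Bad, mem_iInter]
      intro k
      obtain ⟨i, hik, hiS⟩ := frequently_atTop.mp hfreq (max k 1)
      have hi1 : 1 ≤ i := le_trans (le_max_right k 1) hik
      have hik' : k ≤ i := le_trans (le_max_left k 1) hik
      have hi0 : ((i:ℝ≥0∞)) ≠ 0 := by
        have h6 : i ≠ 0 := by omega
        exact_mod_cast h6
      have hlt : ((Sinfo U I x ((2:ℝ)⁻¹^i) : ℕ∞) : ℝ≥0∞) <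
          ENNReal.ofReal (q':ℝ) * (i:ℝ≥0∞) := by
        rw [ENNReal.div_lt_iff (Or.inl hi0) (Or.inl (ENNReal.natCast_ne_top i))] at hiS
        exact hiS
      set Sset := {n : ℕ∞ | ∃ p : List Bool, (p.length : ℕ∞) = n ∧
        ∃ s ∈ U p, dist (I s) x < (2:ℝ)⁻¹ ^ i} with hSset
      have hSval : Sinfo U I x ((2:ℝ)⁻¹^i) = sInf Sset := rfl
      have hne : Sset.Nonempty := by
        by_contra hemp
        rw [not_nonempty_iff_eq_empty] at hemp
        rw [hSval, hemp, sInf_empty] at hlt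
        simp only [ENat.toENNReal_top] at hlt
        exact absurd hlt (not_top_lt)
      have hmem : sInf Sset ∈ Sset := csInf_mem hne
      obtain ⟨p, hp, s, hs, hdist⟩ := hmem
      have hplen : (p.length : ℝ) < (q':ℝ) * i := by
        rw [hSval, ← hp] at hlt
        rw [← ENNReal.ofReal_natCast i, ← ENNReal.ofReal_mul hq'0.le] at hlt
        have h8 : ((p.length : ℕ):ℝ≥0∞) < ENNReal.ofReal ((q':ℝ) * i) := by
          exact_mod_cast hlt
        rw [← ENNReal.ofReal_natCast p.length] at h8
        exact lt_of_not_ge fun hcge => absurd h8 (not_lt.mpr (ENNReal.ofReal_le_ofReal hcge))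
      apply mem_iUnion.mpr ⟨i - k, ?_⟩
      rw [Nat.add_sub_cancel' hik']
      apply mem_iUnion.mpr ⟨p, ?_⟩
      rw [if_pos hplen]
      exact mem_iUnion₂.mpr ⟨s, hs, mem_ball.mpr (by rw [dist_comm]; exact hdist)⟩
    exact hxz (q, q', t) ⟨⟨by exact_mod_cast hq'0, by exact_mod_cast hq1⟩, ht, hbadmem⟩
  exact ⟨h1, fun δ hδ => second_of_first U I x _ δ hδ h1⟩
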